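/- Let H, H', K, K' be finite-dimensional complex inner product spaces, and let d : H → K and d' : H' → K' be linear maps. Suppose there exist linear maps J⁰ : H' → H with ‖J⁰x‖ ≥ ‖x‖ for all x ∈ H', and J¹ : K' → K with ‖J¹y‖ ≤ ‖y‖ for all y ∈ K', such that d ∘ J⁰ = J¹ ∘ d'. Let λ_1 ≤ … ≤ λ_n (n = dim H) and λ'_1 ≤ … ≤ λ'_{n'} (n' = dim H') be the eigenvalues, in nondecreasing order with multiplicity, of the positive semidefinite self-adjoint operators d*d on H and d'*d' on H'. Then n ≥ n' and λ_k ≤ λ'_k for all 1 ≤ k ≤ n'. -/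

import Mathlib

open FiniteDimensional

noncomputable def opEig {H : Type} [NormedAddCommGroup H] [InnerProductSpace ℂ H]
    [FiniteDimensional ℂ H] (T : H →ₗ[ℂ] H) (k : ℕ) : ℝ :=
  (((LinearMap.charpoly T).roots.map Complex.re).sort (· ≤ ·)).getD k 0

section Aux
variable {E : Type} [NormedAddCommGroup E] [InnerProductSpace ℂ E] [FiniteDimensional ℂ E]

local notation "⟪" x ", " y "⟫" => @inner ℂ _ _ x y

lemma opEig_eq_of_basis {n : ℕ} (T : E →ₗ[ℂ] E)
    (e : OrthonormalBasis (Fin n) ℂ E) (ν : Fin n → ℝ)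
    (hTe : ∀ i, T (e i) = (ν i : ℂ) • e i) (hmono : Monotone ν)
    (k : ℕ) (hk : k < n) : opEig T k = ν ⟨k, hk⟩ := by
  classical
  have hM : LinearMap.toMatrix e.toBasis e.toBasis T
      = Matrix.diagonal (fun i => (ν i : ℂ)) := by
    ext i j
    rw [LinearMap.toMatrix_apply]
    rw [show T (e.toBasis j) = (ν j : ℂ) • e.toBasis j by simp [hTe j], map_smul,
      Module.Basis.repr_self]
    by_cases h : i = j
    · simp [Matrix.diagonal, h, Finsupp.single_apply]
    · simp only [Matrix.diagonal, h, Finsupp.smul_apply, Finsupp.single_apply]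
      simp only [Matrix.of_apply, if_neg h]
      rw [if_neg (fun hji : j = i => h hji.symm)]
      simp
  have hc : T.charpoly = ∏ i : Fin n, (Polynomial.X - Polynomial.C ((ν i : ℂ))) := by
    rw [← LinearMap.charpoly_toMatrix T e.toBasis, hM,
      Matrix.charpoly_of_upperTriangular _ (Matrix.blockTriangular_diagonal _)]
    simp
  have hroots : T.charpoly.roots = Finset.univ.val.map (fun i => (ν i : ℂ)) := by
    rw [hc]
    have := Polynomial.roots_multiset_prod_X_sub_C
      (Finset.univ.val.map (fun i : Fin n => (ν i : ℂ)))
    rw [Multiset.map_map] at this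
    rw [Finset.prod_eq_multiset_prod] at *
    exact this
  have hre : T.charpoly.roots.map Complex.re = Finset.univ.val.map ν := by
    rw [hroots, Multiset.map_map]
    simp [Function.comp_def]
  have hofn : (Finset.univ.val : Multiset (Fin n)).map ν = ↑(List.ofFn ν) := by
    rw [List.ofFn_eq_map]
    rfl
  have hsort : ((Finset.univ.val.map ν).sort (· ≤ ·)) = List.ofFn ν := by
    rw [hofn]
    refine List.Perm.eq_of_pairwise' (Multiset.pairwise_sort _ _) (List.sortedLE_ofFn_iff.mpr hmono).pairwise ?_
    exact Multiset.coe_eq_coe.mp (Multiset.sort_eq _ _)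
  have hlen : k < (List.ofFn ν).length := by simpa using hk
  rw [opEig, hre, hsort, List.getD_eq_getElem _ _ hlen]
  simp

lemma exists_eigenbasis (T : E →ₗ[ℂ] E) (hT : T.IsSymmetric) :
    ∃ (e : OrthonormalBasis (Fin (Module.finrank ℂ E)) ℂ E)
      (ν : Fin (Module.finrank ℂ E) → ℝ),
      Monotone ν ∧ (∀ i, T (e i) = (ν i : ℂ) • e i) ∧
      ∀ (k : ℕ) (hk : k < Module.finrank ℂ E), opEig T k = ν ⟨k, hk⟩ := by
  have hn : Module.finrank ℂ E = Module.finrank ℂ E := rfl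
  set n := Module.finrank ℂ E with hdef
  let b := hT.eigenvectorBasis hn
  let μ := hT.eigenvalues hn
  let σ := Tuple.sort μ
  have hmono : Monotone (μ ∘ σ) := Tuple.monotone_sort μ
  have hTe : ∀ i, T ((b.reindex σ.symm) i) = ((μ ∘ σ) i : ℂ) • (b.reindex σ.symm) i := by
    intro i
    rw [b.reindex_apply]
    simp only [Equiv.symm_symm]
    exact hT.apply_eigenvectorBasis hn (σ i)
  exact ⟨b.reindex σ.symm, μ ∘ σ, hmono, hTe,
    fun k hk => opEig_eq_of_basis T _ _ hTe hmono k hk⟩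

lemma re_inner_eq_sum {n : ℕ} (e : OrthonormalBasis (Fin n) ℂ E) (T : E →ₗ[ℂ] E)
    (hT : T.IsSymmetric) (ν : Fin n → ℝ) (hTe : ∀ i, T (e i) = (ν i : ℂ) • e i) (x : E) :
    (⟪x, T x⟫).re = ∑ i, ν i * ‖⟪e i, x⟫‖ ^ 2 := by
  rw [← e.sum_inner_mul_inner x (T x)]
  rw [Complex.re_sum]
  refine Finset.sum_congr rfl fun i _ => ?_
  have h1 : ⟪e i, T x⟫ = (ν i : ℂ) * ⟪e i, x⟫ := by
    rw [← hT (e i) x, hTe i, inner_smul_left]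
    simp
  have h2 : ⟪x, e i⟫ = (starRingEnd ℂ) ⟪e i, x⟫ := (inner_conj_symm _ _).symm
  rw [h1, h2]
  have : (starRingEnd ℂ) ⟪e i, x⟫ * ((ν i : ℂ) * ⟪e i, x⟫)
      = (ν i : ℂ) * ((‖⟪e i, x⟫‖ : ℂ) ^ 2) := by
    rw [← Complex.conj_mul' ⟪e i, x⟫]
    ring
  rw [this, ← Complex.ofReal_pow, ← Complex.ofReal_mul, Complex.ofReal_re]

lemma norm_sq_eq_sum {n : ℕ} (e : OrthonormalBasis (Fin n) ℂ E) (x : E) :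
    ‖x‖ ^ 2 = ∑ i, ‖⟪e i, x⟫‖ ^ 2 := by
  have hsym : (LinearMap.id : E →ₗ[ℂ] E).IsSymmetric := fun _ _ => rfl
  have := re_inner_eq_sum e LinearMap.id hsym (fun _ => 1) (by intro i; simp) x
  simp only [LinearMap.id_coe, id_eq, one_mul] at this
  rw [← this]
  exact (inner_self_eq_norm_sq (𝕜 := ℂ) x).symm

lemma inner_eq_zero_of_mem_span {n : ℕ} (e : OrthonormalBasis (Fin n) ℂ E)
    (S : Finset (Fin n)) {x : E} (hx : x ∈ Submodule.span ℂ (e '' ↑S))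
    {j : Fin n} (hj : j ∉ S) : ⟪e j, x⟫ = 0 := by
  induction hx using Submodule.span_induction with
  | mem y hy =>
    obtain ⟨i, hi, rfl⟩ := hy
    exact e.orthonormal.2 (fun h : j = i => hj (h ▸ hi))
  | zero => exact inner_zero_right _
  | add y z _ _ hy hz => rw [inner_add_right, hy, hz, add_zero]
  | smul c y _ hy => rw [inner_smul_right, hy, mul_zero]

lemma finrank_span_image {n : ℕ} (e : OrthonormalBasis (Fin n) ℂ E) (S : Finset (Fin n)) :
    Module.finrank ℂ (Submodule.span ℂ (e '' ↑S)) = S.card := by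
  classical
  have hli : LinearIndependent ℂ (fun i : (↑S : Set (Fin n)) => e i) := by
    have := e.toBasis.linearIndependent
    rw [e.coe_toBasis] at this
    exact this.comp _ Subtype.val_injective
  have himg : e '' ↑S = Set.range (fun i : (↑S : Set (Fin n)) => e i) := by
    rw [← Set.image_eq_range]
  rw [himg, finrank_span_eq_card hli]
  simp
end Aux

section Aux2
variable {E : Type} [NormedAddCommGroup E] [InnerProductSpace ℂ E] [FiniteDimensional ℂ E]

local notation "⟪" x ", " y "⟫" => @inner ℂ _ _ x y

lemma rayleigh_le_of_mem {n : ℕ} (e : OrthonormalBasis (Fin n) ℂ E) (T : E →ₗ[ℂ] E)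
    (hT : T.IsSymmetric) (ν : Fin n → ℝ) (hTe : ∀ i, T (e i) = (ν i : ℂ) • e i)
    (hmono : Monotone ν) (m : Fin n) {x : E}
    (hx : x ∈ Submodule.span ℂ (e '' ↑(Finset.Iic m))) :
    (⟪x, T x⟫).re ≤ ν m * ‖x‖ ^ 2 := by
  rw [re_inner_eq_sum e T hT ν hTe, norm_sq_eq_sum e, Finset.mul_sum]
  refine Finset.sum_le_sum fun i _ => ?_
  by_cases h : i ∈ Finset.Iic m
  · exact mul_le_mul_of_nonneg_right (hmono (Finset.mem_Iic.mp h)) (sq_nonneg _)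
  · rw [inner_eq_zero_of_mem_span e _ hx h]
    simp

lemma rayleigh_ge_of_mem {n : ℕ} (e : OrthonormalBasis (Fin n) ℂ E) (T : E →ₗ[ℂ] E)
    (hT : T.IsSymmetric) (ν : Fin n → ℝ) (hTe : ∀ i, T (e i) = (ν i : ℂ) • e i)
    (hmono : Monotone ν) (m : Fin n) {x : E}
    (hx : x ∈ Submodule.span ℂ (e '' ↑(Finset.Ici m))) :
    ν m * ‖x‖ ^ 2 ≤ (⟪x, T x⟫).re := by
  rw [re_inner_eq_sum e T hT ν hTe, norm_sq_eq_sum e, Finset.mul_sum]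
  refine Finset.sum_le_sum fun i _ => ?_
  by_cases h : i ∈ Finset.Ici m
  · exact mul_le_mul_of_nonneg_right (hmono (Finset.mem_Ici.mp h)) (sq_nonneg _)
  · rw [inner_eq_zero_of_mem_span e _ hx h]
    simp
end Aux2

section Main
variable {E F : Type} [NormedAddCommGroup E] [InnerProductSpace ℂ E] [FiniteDimensional ℂ E]
  [NormedAddCommGroup F] [InnerProductSpace ℂ F] [FiniteDimensional ℂ F]

local notation "⟪" x ", " y "⟫" => @inner ℂ _ _ x y

lemma adjoint_comp_isSymmetric (d : E →ₗ[ℂ] F) :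
    (LinearMap.adjoint d ∘ₗ d).IsSymmetric := by
  intro x y
  simp only [LinearMap.comp_apply]
  rw [LinearMap.adjoint_inner_left, LinearMap.adjoint_inner_right]

lemma re_inner_adjoint_comp (d : E →ₗ[ℂ] F) (x : E) :
    (⟪x, (LinearMap.adjoint d ∘ₗ d) x⟫).re = ‖d x‖ ^ 2 := by
  simp only [LinearMap.comp_apply]
  rw [LinearMap.adjoint_inner_right]
  exact inner_self_eq_norm_sq (𝕜 := ℂ) (d x)

set_option maxHeartbeats 1000000 in
theorem stmt5 {H K H' K' : Type}
    [NormedAddCommGroup H] [InnerProductSpace ℂ H] [FiniteDimensional ℂ H]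
    [NormedAddCommGroup K] [InnerProductSpace ℂ K] [FiniteDimensional ℂ K]
    [NormedAddCommGroup H'] [InnerProductSpace ℂ H'] [FiniteDimensional ℂ H']
    [NormedAddCommGroup K'] [InnerProductSpace ℂ K'] [FiniteDimensional ℂ K']
    (d : H →ₗ[ℂ] K) (d' : H' →ₗ[ℂ] K')
    (J0 : H' →ₗ[ℂ] H) (J1 : K' →ₗ[ℂ] K)
    (hJ0 : ∀ x : H', ‖x‖ ≤ ‖J0 x‖)
    (hJ1 : ∀ y : K', ‖J1 y‖ ≤ ‖y‖)
    (hcomm : d ∘ₗ J0 = J1 ∘ₗ d') :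
    Module.finrank ℂ H' ≤ Module.finrank ℂ H ∧
      ∀ k : ℕ, 1 ≤ k → k ≤ Module.finrank ℂ H' →
        opEig (LinearMap.adjoint d ∘ₗ d) (k - 1)
          ≤ opEig (LinearMap.adjoint d' ∘ₗ d') (k - 1) := by
  classical
  have hinj : Function.Injective J0 := by
    rw [injective_iff_map_eq_zero]
    intro a ha
    have := hJ0 a
    rw [ha, norm_zero] at this
    exact norm_le_zero_iff.mp this
  have hfr : Module.finrank ℂ H' ≤ Module.finrank ℂ H :=
    LinearMap.finrank_le_finrank_of_injective hinj
  refine ⟨hfr, fun k hk1 hk2 => ?_⟩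
  set n := Module.finrank ℂ H with hndef
  set n' := Module.finrank ℂ H' with hn'def
  have hm' : k - 1 < n' := by omega
  have hm : k - 1 < n := lt_of_lt_of_le hm' hfr
  set T := LinearMap.adjoint d ∘ₗ d with hTdef
  set T' := LinearMap.adjoint d' ∘ₗ d' with hT'def
  have hT : T.IsSymmetric := adjoint_comp_isSymmetric d
  have hT' : T'.IsSymmetric := adjoint_comp_isSymmetric d'
  obtain ⟨e, ν, hmono, hTe, hop⟩ := exists_eigenbasis T hT
  obtain ⟨e', ν', hmono', hTe', hop'⟩ := exists_eigenbasis T' hT'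
  rw [hop _ hm, hop' _ hm']
  set mm : Fin n := ⟨k - 1, hm⟩
  set mm' : Fin n' := ⟨k - 1, hm'⟩
  -- nonnegativity of ν' mm'
  have hν'nonneg : 0 ≤ ν' mm' := by
    have h1 : (⟪e' mm', T' (e' mm')⟫).re = ν' mm' := by
      rw [hTe' mm', inner_smul_right]
      have h : ⟪e' mm', e' mm'⟫ = 1 := by
        rw [inner_self_eq_norm_sq_to_K (𝕜 := ℂ) (e' mm'), e'.orthonormal.1 mm']
        simp
      rw [h, mul_one, Complex.ofReal_re]
    have h2 : 0 ≤ (⟪e' mm', T' (e' mm')⟫).re := by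
      rw [re_inner_adjoint_comp d' (e' mm')]
      positivity
    linarith
  -- subspaces
  set V' : Submodule ℂ H' := Submodule.span ℂ (e' '' ↑(Finset.Iic mm')) with hV'def
  set V : Submodule ℂ H := V'.map J0 with hVdef
  set W : Submodule ℂ H := Submodule.span ℂ (e '' ↑(Finset.Ici mm)) with hWdef
  have hV'rank : Module.finrank ℂ V' = k := by
    rw [hV'def, finrank_span_image, Fin.card_Iic]
    simp [mm']
    omega
  have hVrank : Module.finrank ℂ V = k := by
    rw [← hV'rank]
    exact (LinearEquiv.finrank_eq (Submodule.equivMapOfInjective J0 hinj V')).symm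
  have hWrank : Module.finrank ℂ W = n - (k - 1) := by
    rw [hWdef, finrank_span_image, Fin.card_Ici]
  have hpos : 0 < Module.finrank ℂ ↥(V ⊓ W) := by
    have h1 := Submodule.finrank_sup_add_finrank_inf_eq V W
    have h2 := Submodule.finrank_le (V ⊔ W)
    omega
  have : Nontrivial ↥(V ⊓ W) := Module.finrank_pos_iff.mp hpos
  obtain ⟨z, hzne⟩ := exists_ne (0 : ↥(V ⊓ W))
  have hz0 : (z : H) ≠ 0 := fun h => hzne (Subtype.ext h)
  obtain ⟨hzV, hzW⟩ := Submodule.mem_inf.mp z.2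
  obtain ⟨y, hyV', hyx⟩ := Submodule.mem_map.mp hzV
  have hy0 : y ≠ 0 := by
    intro h
    apply hz0
    rw [← hyx, h, map_zero]
  have hxnorm : 0 < ‖(z : H)‖ := norm_pos_iff.mpr hz0
  -- chain of inequalities
  have step1 : ν mm * ‖(z : H)‖ ^ 2 ≤ (⟪(z : H), T (z : H)⟫).re :=
    rayleigh_ge_of_mem e T hT ν hTe hmono mm hzW
  have step2 : (⟪(z : H), T (z : H)⟫).re = ‖d (z : H)‖ ^ 2 := re_inner_adjoint_comp d _
  have step3 : ‖d (z : H)‖ ^ 2 ≤ ‖d' y‖ ^ 2 := by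
    have hc : d (J0 y) = J1 (d' y) := LinearMap.ext_iff.mp hcomm y
    rw [← hyx, hc]
    exact pow_le_pow_left₀ (norm_nonneg _) (hJ1 (d' y)) 2
  have step4 : ‖d' y‖ ^ 2 = (⟪y, T' y⟫).re := (re_inner_adjoint_comp d' y).symm
  have step5 : (⟪y, T' y⟫).re ≤ ν' mm' * ‖y‖ ^ 2 :=
    rayleigh_le_of_mem e' T' hT' ν' hTe' hmono' mm' hyV'
  have step6 : ν' mm' * ‖y‖ ^ 2 ≤ ν' mm' * ‖(z : H)‖ ^ 2 := by
    apply mul_le_mul_of_nonneg_left _ hν'nonneg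
    have h1 := hJ0 y
    rw [hyx] at h1
    exact pow_le_pow_left₀ (norm_nonneg _) h1 2
  have : ν mm * ‖(z : H)‖ ^ 2 ≤ ν' mm' * ‖(z : H)‖ ^ 2 := by linarith
  have hsq : 0 < ‖(z : H)‖ ^ 2 := by positivity
  exact le_of_mul_le_mul_right (by linarith [this]) hsq

end Main
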